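/- Let n ≥ 1 be a natural number. Then for all x > 0, w(f_n)(x) = (4n/x²) · ( f_n(x)³ − ((3n−1)/x)·f_n'(x)·f_n(x)² + ((2n² − n + x²)/x²)·f_n'(x)²·f_n(x) − ((n−1)/x)·f_n'(x)³ ). -/

import Mathlib

open scoped ContDiff

/-- Determinant of the 3x3 Hankel-Wronskian matrix of h (rows of 2nd..4th derivatives). -/
noncomputable def w (f : ℝ → ℝ) (x : ℝ) : ℝ :=
  Matrix.det !![deriv^[2] f x, deriv f x, f x;
    deriv^[3] f x, deriv^[2] f x, deriv f x;
    deriv^[4] f x, deriv^[3] f x, deriv^[2] f x]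

/-- `fn n x = √(π/2)·x^(n+1/2)·J_(n+1/2)(x)`, via the equivalent recursive definition
`fn 0 = sin`, `fn (n+1) x = ∫_0^x t·fn n t dt`. -/
noncomputable def fn : ℕ → ℝ → ℝ
  | 0 => fun x => Real.sin x
  | n + 1 => fun x => ∫ t in (0:ℝ)..x, t * fn n t

lemma fn_cont : ∀ n, Continuous (fn n) := by
  intro n
  induction n with
  | zero => exact Real.continuous_sin
  | succ n ih =>
    have h : ∀ x : ℝ, HasDerivAt (fn (n+1)) (x * fn n x) x := fun x =>
      ((continuous_id.mul ih).integral_hasStrictDerivAt 0 x).hasDerivAt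
    exact continuous_iff_continuousAt.2 fun x => (h x).differentiableAt.continuousAt

lemma fn_hasDerivAt (n : ℕ) (x : ℝ) : HasDerivAt (fn (n+1)) (x * fn n x) x :=
  ((continuous_id.mul (fn_cont n)).integral_hasStrictDerivAt 0 x).hasDerivAt

lemma fn_deriv (n : ℕ) : deriv (fn (n+1)) = fun x => x * fn n x :=
  funext fun x => (fn_hasDerivAt n x).deriv

lemma fn_contDiff : ∀ n, ContDiff ℝ ∞ (fn n) := by
  intro n
  induction n with
  | zero => exact Real.contDiff_sin
  | succ n ih =>
    rw [contDiff_infty_iff_deriv]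
    exact ⟨fun x => (fn_hasDerivAt n x).differentiableAt, by rw [fn_deriv]; exact contDiff_id.mul ih⟩

lemma fn_zero (n : ℕ) : fn (n+1) 0 = 0 := by
  simp [fn]

lemma fn_diff (n : ℕ) : Differentiable ℝ (fn n) :=
  (fn_contDiff n).differentiable (by norm_num)

lemma fn_rec : ∀ n : ℕ, ∀ x : ℝ,
    fn (n+1) x = (2*(n:ℝ)+1) * fn n x - x * deriv (fn n) x := by
  intro n
  induction n with
  | zero =>
    intro x
    have h1 : fn 1 x = Real.sin x - x * Real.cos x := by
      have : ∀ t ∈ Set.uIcc (0:ℝ) x, HasDerivAt (fun t => Real.sin t - t * Real.cos t)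
          (t * Real.sin t) t := by
        intro t _
        have := (Real.hasDerivAt_sin t).sub ((hasDerivAt_id t).mul (Real.hasDerivAt_cos t))
        convert this using 1
        · rfl
        · rfl
        · rfl
        · simp [mul_comm]
      have hInt : IntervalIntegrable (fun t : ℝ => t * Real.sin t) MeasureTheory.volume 0 x :=
        (continuous_id.mul Real.continuous_sin).intervalIntegrable 0 x
      have := intervalIntegral.integral_eq_sub_of_hasDerivAt this hInt
      simpa [fn] using this
    have h2 : deriv (fn 0) x = Real.cos x := by
      simp [fn, Real.deriv_sin]
    rw [h1, h2]
    simp [fn]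
  | succ n ih =>
    have key : ∀ x : ℝ, fn (n+2) x - ((2*(n:ℝ)+3) * fn (n+1) x - x^2 * fn n x) = 0 := by
      have hd : Differentiable ℝ (fun x : ℝ =>
          fn (n+2) x - ((2*(n:ℝ)+3) * fn (n+1) x - x^2 * fn n x)) := by
        exact (fn_diff (n+2)).sub ((differentiable_const _ |>.mul (fn_diff (n+1))).sub
          ((differentiable_pow 2).mul (fn_diff n)))
      have hderiv : ∀ x : ℝ, deriv (fun x : ℝ =>
          fn (n+2) x - ((2*(n:ℝ)+3) * fn (n+1) x - x^2 * fn n x)) x = 0 := by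
        intro x
        have h1 : HasDerivAt (fun x : ℝ =>
            fn (n+2) x - ((2*(n:ℝ)+3) * fn (n+1) x - x^2 * fn n x))
            ((x * fn (n+1) x) - ((2*(n:ℝ)+3) * (x * fn n x) -
              (2*x * fn n x + x^2 * deriv (fn n) x))) x := by
          exact (fn_hasDerivAt (n+1) x).sub
            (((fn_hasDerivAt n x).const_mul _).sub
              (((hasDerivAt_pow 2 x).mul ((fn_diff n x).hasDerivAt)).congr_deriv (by ring)))
        rw [h1.deriv]
        linear_combination x * ih x
      intro x
      have := is_const_of_deriv_eq_zero hd hderiv x 0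
      simpa [fn_zero] using this
    intro x
    have hk := key x
    have hd1 : deriv (fn (n+1)) x = x * fn n x := by rw [fn_deriv]
    push_cast
    rw [hd1]
    linear_combination key x

lemma ode2 (n : ℕ) (x : ℝ) :
    x * deriv (deriv (fn (n+1))) x
      = 2*((n:ℝ)+1) * deriv (fn (n+1)) x - x * fn (n+1) x := by
  rw [fn_deriv n]
  have h1 : HasDerivAt (fun y : ℝ => y * fn n y) (1 * fn n x + x * deriv (fn n) x) x :=
    (hasDerivAt_id x).mul (fn_diff n x).hasDerivAt
  rw [h1.deriv]
  linear_combination x * fn_rec n x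

lemma ode3 (n : ℕ) (x : ℝ) :
    x * deriv (deriv (deriv (fn (n+1)))) x
      = (2*((n:ℝ)+1)-1) * deriv (deriv (fn (n+1))) x
        - x * deriv (fn (n+1)) x - fn (n+1) x := by
  set f := fn (n+1) with hf
  have c0 := fn_contDiff (n+1)
  have c1 : ContDiff ℝ ∞ (deriv f) := (contDiff_infty_iff_deriv.mp c0).2
  have c2 : ContDiff ℝ ∞ (deriv (deriv f)) := (contDiff_infty_iff_deriv.mp c1).2
  have hfun : (fun y : ℝ => y * deriv (deriv f) y)
      = (fun y : ℝ => 2*((n:ℝ)+1) * deriv f y - y * f y) := funext fun y => ode2 n y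
  have hL : HasDerivAt (fun y : ℝ => y * deriv (deriv f) y)
      (1 * deriv (deriv f) x + x * deriv (deriv (deriv f)) x) x :=
    (hasDerivAt_id x).mul (c2.differentiable (by norm_num) x).hasDerivAt
  have hR : HasDerivAt (fun y : ℝ => 2*((n:ℝ)+1) * deriv f y - y * f y)
      (2*((n:ℝ)+1) * deriv (deriv f) x - (1 * f x + x * deriv f x)) x :=
    (((c1.differentiable (by norm_num) x).hasDerivAt.const_mul _)).sub
      ((hasDerivAt_id x).mul (fn_diff (n+1) x).hasDerivAt)
  have heq : deriv (fun y : ℝ => y * deriv (deriv f) y) x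
      = deriv (fun y : ℝ => 2*((n:ℝ)+1) * deriv f y - y * f y) x := by rw [hfun]
  rw [hL.deriv, hR.deriv] at heq
  linear_combination heq

lemma ode4 (n : ℕ) (x : ℝ) :
    x * deriv (deriv (deriv (deriv (fn (n+1))))) x
      = (2*((n:ℝ)+1)-2) * deriv (deriv (deriv (fn (n+1)))) x
        - x * deriv (deriv (fn (n+1))) x - 2 * deriv (fn (n+1)) x := by
  set f := fn (n+1) with hf
  have c0 := fn_contDiff (n+1)
  have c1 : ContDiff ℝ ∞ (deriv f) := (contDiff_infty_iff_deriv.mp c0).2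
  have c2 : ContDiff ℝ ∞ (deriv (deriv f)) := (contDiff_infty_iff_deriv.mp c1).2
  have c3 : ContDiff ℝ ∞ (deriv (deriv (deriv f))) := (contDiff_infty_iff_deriv.mp c2).2
  have hfun : (fun y : ℝ => y * deriv (deriv (deriv f)) y)
      = (fun y : ℝ => (2*((n:ℝ)+1)-1) * deriv (deriv f) y - y * deriv f y - f y) :=
    funext fun y => ode3 n y
  have hL : HasDerivAt (fun y : ℝ => y * deriv (deriv (deriv f)) y)
      (1 * deriv (deriv (deriv f)) x + x * deriv (deriv (deriv (deriv f))) x) x :=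
    (hasDerivAt_id x).mul (c3.differentiable (by norm_num) x).hasDerivAt
  have hR : HasDerivAt
      (fun y : ℝ => (2*((n:ℝ)+1)-1) * deriv (deriv f) y - y * deriv f y - f y)
      ((2*((n:ℝ)+1)-1) * deriv (deriv (deriv f)) x - (1 * deriv f x + x * deriv (deriv f) x)
        - deriv f x) x :=
    ((((c2.differentiable (by norm_num) x).hasDerivAt.const_mul _)).sub
      ((hasDerivAt_id x).mul (c1.differentiable (by norm_num) x).hasDerivAt)).sub
      (fn_diff (n+1) x).hasDerivAt
  have heq : deriv (fun y : ℝ => y * deriv (deriv (deriv f)) y) x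
      = deriv (fun y : ℝ => (2*((n:ℝ)+1)-1) * deriv (deriv f) y - y * deriv f y - f y) x := by
    rw [hfun]
  rw [hL.deriv, hR.deriv] at heq
  linear_combination heq

theorem stmt_12 (n : ℕ) (hn : 1 ≤ n) :
    ∀ x > (0 : ℝ),
      w (fn n) x = (4 * (n : ℝ) / x ^ 2) *
        ((fn n x) ^ 3 - (3 * (n : ℝ) - 1) / x * deriv (fn n) x * (fn n x) ^ 2 +
          (2 * (n : ℝ) ^ 2 - (n : ℝ) + x ^ 2) / x ^ 2 * (deriv (fn n) x) ^ 2 * fn n x -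
          ((n : ℝ) - 1) / x * (deriv (fn n) x) ^ 3) := by
  obtain ⟨m, rfl⟩ : ∃ m, n = m + 1 := ⟨n - 1, (Nat.succ_pred_eq_of_pos hn).symm⟩
  intro x hx
  have hx0 : x ≠ 0 := ne_of_gt hx
  simp only [w, Matrix.det_fin_three, Matrix.of_apply, Matrix.cons_val', Matrix.cons_val_zero,
    Matrix.cons_val_one, Matrix.head_cons, Matrix.empty_val', Matrix.cons_val_fin_one,
    Matrix.head_fin_const, Matrix.cons_val_two, Matrix.tail_cons,
    Function.iterate_succ_apply, Function.iterate_zero_apply, Function.iterate_one]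
  push_cast
  set f := fn (m+1) with hfdef
  have hc : deriv (deriv f) x = (2*((m:ℝ)+1) * deriv f x - x * f x)/x := by
    rw [eq_div_iff hx0]; linear_combination ode2 m x
  have hd : deriv (deriv (deriv f)) x
      = ((2*((m:ℝ)+1)-1) * ((2*((m:ℝ)+1) * deriv f x - x * f x)/x)
          - x * deriv f x - f x)/x := by
    rw [eq_div_iff hx0]
    linear_combination ode3 m x + (2*((m:ℝ)+1)-1) * hc
  have he : deriv (deriv (deriv (deriv f))) x
      = ((2*((m:ℝ)+1)-2) * (((2*((m:ℝ)+1)-1) * ((2*((m:ℝ)+1) * deriv f x - x * f x)/x)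
            - x * deriv f x - f x)/x)
          - x * ((2*((m:ℝ)+1) * deriv f x - x * f x)/x) - 2 * deriv f x)/x := by
    rw [eq_div_iff hx0]
    linear_combination ode4 m x + (2*((m:ℝ)+1)-2) * hd - x * hc
  rw [hc, hd, he]
  field_simp
  ring
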